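/- arXiv:1501.00112 — 2 statements merged into one kernel-verified Lean document; each statement's English description precedes it below -/
import Mathlib

section
/- For t > 0 and all (q,p) ∈ ℝ², the function ψ_t(q,p) = (2π)^{-1/2} ∫_ℝ e^{i p₀ q/ħ} e^{-t(p+p₀)²/(2ħ)} ψ̃(p₀) dp₀ (with ψ̃ ∈ L¹(ℝ)) can be written as ψ_t(q,p) = f(q + i t p) e^{-t p²/(2ħ)} where f is a holomorphic function of z = q + i t p on ℂ; explicitly f(z) = (2π)^{-1/2} ∫_ℝ e^{i p₀ z/ħ} e^{-t p₀²/(2ħ)} ψ̃(p₀) dp₀. -/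
open MeasureTheory

lemma aux_int (ψt : ℝ → ℂ) (hψ1 : Integrable ψt) (hψc : HasCompactSupport ψt)
    (g : ℝ → ℂ) (hg : Continuous g) : Integrable (fun p₀ => g p₀ * ψt p₀) := by
  obtain ⟨C, hC⟩ := (hψc.isCompact).exists_bound_of_continuousOn hg.continuousOn
  refine (hψ1.norm.const_mul (max C 0)).mono' (hg.aestronglyMeasurable.mul hψ1.1) ?_
  filter_upwards with p₀
  by_cases h : ψt p₀ = 0
  · simp [h]
  · have hp : p₀ ∈ tsupport ψt := subset_tsupport ψt (by simpa using h)
    rw [norm_mul]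
    exact mul_le_mul_of_nonneg_right ((hC p₀ hp).trans (le_max_left _ _)) (norm_nonneg _)

/-- For `t > 0`, the regularized state
`ψ_t(q,p) = (2π)^{-1/2} ∫ e^{i p₀ q/ħ} e^{-t(p+p₀)²/(2ħ)} ψ̃(p₀) dp₀` (with `ψ̃` integrable
and compactly supported) is a polarized section: `ψ_t(q,p) = f(q + i t p) e^{-t p²/(2ħ)}`
where `f(z) = (2π)^{-1/2} ∫ e^{i p₀ z/ħ} e^{-t p₀²/(2ħ)} ψ̃(p₀) dp₀` is holomorphic on `ℂ`. -/
theorem stmt9 (ℏ t : ℝ) (hℏ : 0 < ℏ) (ht : 0 < t) (ψt : ℝ → ℂ)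
    (hψ1 : Integrable ψt) (hψc : HasCompactSupport ψt) :
    Differentiable ℂ
      (fun z : ℂ => ((2 * Real.pi : ℝ) : ℂ) ^ (-(1 / 2 : ℂ)) *
        ∫ p₀ : ℝ, Complex.exp (Complex.I * (p₀ : ℂ) * z / (ℏ : ℂ))
          * ((Real.exp (-t * p₀ ^ 2 / (2 * ℏ)) : ℝ) : ℂ) * ψt p₀) ∧
    ∀ q p : ℝ,
      ((2 * Real.pi : ℝ) : ℂ) ^ (-(1 / 2 : ℂ)) *
          (∫ p₀ : ℝ, Complex.exp (Complex.I * (p₀ : ℂ) * (q : ℂ) / (ℏ : ℂ))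
            * ((Real.exp (-t * (p + p₀) ^ 2 / (2 * ℏ)) : ℝ) : ℂ) * ψt p₀)
        = (((2 * Real.pi : ℝ) : ℂ) ^ (-(1 / 2 : ℂ)) *
            ∫ p₀ : ℝ, Complex.exp (Complex.I * (p₀ : ℂ) * ((q : ℂ) + Complex.I * t * p) / (ℏ : ℂ))
              * ((Real.exp (-t * p₀ ^ 2 / (2 * ℏ)) : ℝ) : ℂ) * ψt p₀)
          * ((Real.exp (-t * p ^ 2 / (2 * ℏ)) : ℝ) : ℂ) := by
  constructor
  ·   
    refine Differentiable.const_mul (fun z₀ => ?_) _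
    set R : ℝ := |z₀.im| + 1 with hR
    set g : ℝ → ℝ := fun p₀ => (|p₀| / ℏ) * Real.exp (|p₀| * R / ℏ) with hg
    have hgc : Continuous g := by fun_prop
    obtain ⟨C, hC⟩ := (hψc.isCompact).exists_bound_of_continuousOn hgc.continuousOn
    set F : ℂ → ℝ → ℂ := fun z p₀ => Complex.exp (Complex.I * (p₀ : ℂ) * z / (ℏ : ℂ))
            * ((Real.exp (-t * p₀ ^ 2 / (2 * ℏ)) : ℝ) : ℂ) * ψt p₀ with hF
    set F' : ℂ → ℝ → ℂ := fun z p₀ =>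
        Complex.exp (Complex.I * (p₀ : ℂ) * z / (ℏ : ℂ)) * (Complex.I * (p₀ : ℂ) / (ℏ : ℂ))
            * ((Real.exp (-t * p₀ ^ 2 / (2 * ℏ)) : ℝ) : ℂ) * ψt p₀ with hF'
    have hdiff : ∀ (x : ℂ) (p₀ : ℝ), HasDerivAt (fun z => F z p₀) (F' x p₀) x := by
      intro x p₀
      have e : (fun z : ℂ => Complex.I * (p₀:ℂ) * z / (ℏ:ℂ))
          = fun z : ℂ => (Complex.I * (p₀:ℂ) / (ℏ:ℂ)) * z := by funext z; ring
      have h1 : HasDerivAt (fun z : ℂ => Complex.I * (p₀:ℂ) * z / (ℏ:ℂ))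
          (Complex.I * (p₀:ℂ) / (ℏ:ℂ)) x := by
        rw [e]; simpa using (hasDerivAt_id x).const_mul (Complex.I * (p₀:ℂ) / (ℏ:ℂ))
      exact (h1.cexp.mul_const _).mul_const _
    have hnorm : ∀ x ∈ Metric.ball z₀ 1, ∀ p₀ : ℝ, ‖F' x p₀‖ ≤ g p₀ * ‖ψt p₀‖ := by
      intro x hx p₀
      have him : |x.im| ≤ R := by
        have h1 : |x.im - z₀.im| ≤ ‖x - z₀‖ := by
          simpa using Complex.abs_im_le_norm (x - z₀)
        have h2 : ‖x - z₀‖ < 1 := by simpa [dist_eq_norm] using hx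
        have := abs_sub_abs_le_abs_sub x.im z₀.im
        simp only [hR]; linarith
      have hre : (Complex.I * (p₀:ℂ) * x / (ℏ:ℂ)).re = -(p₀ * x.im) / ℏ := by
        simp [Complex.div_ofReal_re, Complex.mul_re, Complex.mul_im]
      have hexp : ‖Complex.exp (Complex.I * (p₀:ℂ) * x / (ℏ:ℂ))‖ ≤ Real.exp (|p₀| * R / ℏ) := by
        rw [Complex.norm_exp, hre, Real.exp_le_exp]
        gcongr
        calc -(p₀ * x.im) ≤ |p₀ * x.im| := neg_le_abs _
          _ = |p₀| * |x.im| := abs_mul _ _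
          _ ≤ |p₀| * R := by
              exact mul_le_mul_of_nonneg_left him (abs_nonneg _)
      have hIp : ‖Complex.I * (p₀:ℂ) / (ℏ:ℂ)‖ = |p₀| / ℏ := by
        simp [map_div₀, map_mul, Complex.norm_real, abs_of_pos hℏ]
      have hgauss : ‖((Real.exp (-t * p₀ ^ 2 / (2 * ℏ)) : ℝ) : ℂ)‖ ≤ 1 := by
        rw [Complex.norm_real, Real.norm_eq_abs, abs_of_pos (Real.exp_pos _)]
        apply Real.exp_le_one_iff.mpr
        apply div_nonpos_of_nonpos_of_nonneg
        · nlinarith [sq_nonneg p₀]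
        · positivity
      calc ‖F' x p₀‖ = ‖Complex.exp (Complex.I * (p₀:ℂ) * x / (ℏ:ℂ))‖ * ‖Complex.I * (p₀:ℂ) / (ℏ:ℂ)‖
            * ‖((Real.exp (-t * p₀ ^ 2 / (2 * ℏ)) : ℝ) : ℂ)‖ * ‖ψt p₀‖ := by
            simp [hF', norm_mul]
        _ ≤ Real.exp (|p₀| * R / ℏ) * (|p₀| / ℏ) * 1 * ‖ψt p₀‖ := by
            rw [hIp]
            gcongr
        _ = g p₀ * ‖ψt p₀‖ := by rw [hg]; ring
    set bound : ℝ → ℝ := fun p₀ => max C 0 * ‖ψt p₀‖ with hbd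
    have hmain := hasDerivAt_integral_of_dominated_loc_of_deriv_le (F := F) (F' := F')
      (x₀ := z₀) (bound := bound) (Metric.ball_mem_nhds z₀ one_pos)
      (Filter.Eventually.of_forall fun x =>
        ((Continuous.aestronglyMeasurable (by fun_prop)).mul hψ1.1))
      (aux_int ψt hψ1 hψc _ (by fun_prop))
      ((Continuous.aestronglyMeasurable (by fun_prop)).mul hψ1.1)
      (Filter.Eventually.of_forall fun p₀ => fun x hx => ?_)
      ((hψ1.norm.const_mul (max C 0)))
      (Filter.Eventually.of_forall fun p₀ => fun x hx => hdiff x p₀)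
    · exact hmain.2.differentiableAt
    · by_cases h : ψt p₀ = 0
      · simp [hF', h, hbd]
      · have hp : p₀ ∈ tsupport ψt := subset_tsupport ψt (by simpa using h)
        refine (hnorm x hx p₀).trans ?_
        have : g p₀ ≤ max C 0 := le_trans (le_abs_self _) ((hC p₀ hp).trans (le_max_left _ _))
        exact mul_le_mul_of_nonneg_right this (norm_nonneg _)
  · intro q p
    rw [mul_assoc, ← MeasureTheory.integral_mul_const]
    congr 1
    refine integral_congr_ae (Filter.Eventually.of_forall fun p₀ => ?_)
    simp only []
    rw [mul_right_comm _ (ψt p₀)]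
    congr 1
    rw [Complex.ofReal_exp, Complex.ofReal_exp, Complex.ofReal_exp, ← Complex.exp_add,
      ← Complex.exp_add, ← Complex.exp_add]
    congr 1
    have h : (ℏ:ℂ) ≠ 0 := by exact_mod_cast hℏ.ne'
    push_cast
    linear_combination (-(t:ℂ)*p₀*p/ℏ) * Complex.I_sq
end

section
/- Fix ħ > 0 and m ∈ ℕ. The function F(h) = h^{m+1/2} e^{-h/ħ} on (0,∞) attains its unique global maximum at h = ħ(m + 1/2), and for any t > 0 the Gaussian weight e^{-t(h - ħ(m+1/2))²/ħ} is maximized at the same point; hence the L² density |φ_m^{(it)}|²(h) = h^{m+1/2} e^{-h/ħ} e^{-t(h-ħ(m+1/2))²/ħ} concentrates, as t → ∞, at h = ħ(m+1/2) in the sense that for every δ > 0, lim_{t→∞} [∫_{|h - ħ(m+1/2)| > δ} |φ_m^{(it)}|²(h) dh] / [∫₀^∞ |φ_m^{(it)}|²(h) dh] = 0. -/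
open MeasureTheory Filter

private lemma stmt16_max (ℏ : ℝ) (hℏ : 0 < ℏ) (c : ℝ) (hc : 0 < c) (h : ℝ) (hh : 0 < h)
    (hne : h ≠ ℏ * c) :
    h ^ c * Real.exp (-h / ℏ) < (ℏ * c) ^ c * Real.exp (-(ℏ * c) / ℏ) := by
  have hc0 : 0 < ℏ * c := mul_pos hℏ hc
  have hx : h / (ℏ * c) ≠ 1 := fun e => hne ((div_eq_one_iff_eq hc0.ne').1 e)
  have key := Real.log_lt_sub_one_of_pos (div_pos hh hc0) hx
  rw [Real.log_div hh.ne' hc0.ne'] at key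
  have key2 := mul_lt_mul_of_pos_left key hc
  have h1 : c * (h / (ℏ * c)) = h / ℏ := by field_simp
  rw [mul_sub, mul_sub, h1, mul_one] at key2
  have h2 : ℏ * c / ℏ = c := by field_simp
  rw [Real.rpow_def_of_pos hh, Real.rpow_def_of_pos hc0, ← Real.exp_add, ← Real.exp_add]
  exact Real.exp_lt_exp.2 (by rw [neg_div, neg_div, h2]; linarith)

/-- The density `|φ_m^{(it)}|²(h) = h^{m+1/2} e^{-h/ħ} e^{-t(h-ħ(m+1/2))²/ħ}` concentrates at
the Bohr–Sommerfeld leaf `h = ħ(m+1/2)`: the factor `h^{m+1/2} e^{-h/ħ}` has its unique global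
maximum on `(0,∞)` at `h = ħ(m+1/2)`, the Gaussian weight is maximized at the same point, and
for every `δ > 0` the mass fraction outside `|h-ħ(m+1/2)| > δ` tends to `0` as `t → ∞`. -/
theorem stmt16 (ℏ : ℝ) (hℏ : 0 < ℏ) (m : ℕ) :
    (∀ h : ℝ, 0 < h → h ≠ ℏ * (m + 1 / 2) →
      h ^ ((m : ℝ) + 1 / 2) * Real.exp (-h / ℏ)
        < (ℏ * (m + 1 / 2)) ^ ((m : ℝ) + 1 / 2) * Real.exp (-(ℏ * (m + 1 / 2)) / ℏ)) ∧
    (∀ t : ℝ, 0 < t → ∀ h : ℝ, h ≠ ℏ * (m + 1 / 2) →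
      Real.exp (-t * (h - ℏ * (m + 1 / 2)) ^ 2 / ℏ)
        < Real.exp (-t * (ℏ * (m + 1 / 2) - ℏ * (m + 1 / 2)) ^ 2 / ℏ)) ∧
    (∀ δ : ℝ, 0 < δ →
      Tendsto
        (fun t : ℝ =>
          (∫ h in Set.Ioi (0 : ℝ) ∩ {h : ℝ | δ < |h - ℏ * (m + 1 / 2)|},
              h ^ ((m : ℝ) + 1 / 2) * Real.exp (-h / ℏ)
                * Real.exp (-t * (h - ℏ * (m + 1 / 2)) ^ 2 / ℏ)) /
            (∫ h in Set.Ioi (0 : ℝ),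
              h ^ ((m : ℝ) + 1 / 2) * Real.exp (-h / ℏ)
                * Real.exp (-t * (h - ℏ * (m + 1 / 2)) ^ 2 / ℏ)))
        atTop (nhds 0)) := by
  set c : ℝ := (m : ℝ) + 1 / 2 with hcdef
  have hc : 0 < c := by positivity
  set h₀ : ℝ := ℏ * c with h₀def
  have hh₀ : 0 < h₀ := mul_pos hℏ hc
  refine ⟨fun h hh hne => stmt16_max ℏ hℏ c hc h hh hne, ?_, ?_⟩
  · intro t ht h hne
    apply Real.exp_lt_exp.2
    rw [sub_self]
    have h2 : 0 < (h - h₀) ^ 2 :=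
      lt_of_le_of_ne (sq_nonneg _) (Ne.symm (pow_ne_zero 2 (sub_ne_zero.2 hne)))
    have : -t * (h - h₀) ^ 2 / ℏ < 0 := div_neg_of_neg_of_pos (by nlinarith) hℏ
    simpa using this
  · intro δ hδ
    -- notation
    set g : ℝ → ℝ := fun h => h ^ c * Real.exp (-h / ℏ) with hgdef
    set f : ℝ → ℝ → ℝ := fun t h => g h * Real.exp (-t * (h - h₀) ^ 2 / ℏ) with hfdef
    have hgcont : ContinuousOn g (Set.Ioi (0 : ℝ)) := by
      apply ContinuousOn.mul
      · exact fun x hx =>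
          (Real.continuousAt_rpow_const x c (Or.inl (ne_of_gt hx))).continuousWithinAt
      · exact (Real.continuous_exp.comp (continuous_id.neg.div_const ℏ)).continuousOn
    have hwcont : ∀ t : ℝ, Continuous fun h : ℝ => Real.exp (-t * (h - h₀) ^ 2 / ℏ) := by
      intro t
      exact Real.continuous_exp.comp
        ((continuous_const.mul ((continuous_id.sub continuous_const).pow 2)).div_const ℏ)
    have hgInt : IntegrableOn g (Set.Ioi (0 : ℝ)) := by
      have H := integrableOn_rpow_mul_exp_neg_mul_rpow (p := 1) (s := c) (b := ℏ⁻¹)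
        (by linarith) zero_lt_one (inv_pos.2 hℏ)
      refine H.congr_fun (fun x hx => ?_) measurableSet_Ioi
      dsimp only
      rw [Real.rpow_one]
      congr 1
      ring
    have hfInt : ∀ t : ℝ, 0 ≤ t → IntegrableOn (f t) (Set.Ioi (0 : ℝ)) := by
      intro t ht
      refine Integrable.mono hgInt ?_ ?_
      · exact ((hgcont.mul (hwcont t).continuousOn).aestronglyMeasurable measurableSet_Ioi)
      · filter_upwards with h
        rw [hfdef]
        simp only []
        rw [norm_mul]
        have hw1 : Real.exp (-t * (h - h₀) ^ 2 / ℏ) ≤ 1 := by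
          rw [← Real.exp_zero]
          apply Real.exp_le_exp.2
          apply div_nonpos_of_nonpos_of_nonneg _ hℏ.le
          nlinarith [sq_nonneg (h - h₀)]
        calc ‖g h‖ * ‖Real.exp (-t * (h - h₀) ^ 2 / ℏ)‖
            ≤ ‖g h‖ * 1 := by
              apply mul_le_mul_of_nonneg_left _ (norm_nonneg _)
              rw [Real.norm_eq_abs, abs_of_pos (Real.exp_pos _)]
              exact hw1
          _ = ‖g h‖ := mul_one _
    -- the bad set
    set S : Set ℝ := Set.Ioi (0 : ℝ) ∩ {h : ℝ | δ < |h - h₀|} with hSdef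
    have hSmeas : MeasurableSet S :=
      measurableSet_Ioi.inter
        ((isOpen_lt continuous_const ((continuous_id.sub continuous_const).abs)).measurableSet)
    have hSsub : S ⊆ Set.Ioi (0 : ℝ) := Set.inter_subset_left
    -- the good interval
    set ε : ℝ := δ / 2 with hεdef
    have hε : 0 < ε := by positivity
    set I : Set ℝ := Set.Ioc h₀ (h₀ + ε) with hIdef
    have hIsub : I ⊆ Set.Ioi (0 : ℝ) := fun x hx => lt_trans hh₀ hx.1
    -- constants
    set C : ℝ := ∫ h in Set.Ioi (0 : ℝ), g h with hCdef
    set c₀ : ℝ := ∫ h in I, g h with hc₀def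
    have hgnonneg : ∀ h ∈ Set.Ioi (0 : ℝ), 0 ≤ g h := by
      intro h hh
      have : (0:ℝ) < h := hh
      rw [hgdef]
      positivity
    have hc₀pos : 0 < c₀ := by
      have hle : h₀ ≤ h₀ + ε := by linarith
      have hii : IntervalIntegrable g volume h₀ (h₀ + ε) := by
        rw [intervalIntegrable_iff, Set.uIoc_of_le hle]
        exact hgInt.mono_set hIsub
      have hpos := intervalIntegral.intervalIntegral_pos_of_pos_on hii
        (fun x hx => by
          have hx0 : (0:ℝ) < x := lt_trans hh₀ hx.1
          have : (0:ℝ) < x ^ c * Real.exp (-x / ℏ) := by positivity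
          simpa [hgdef] using this)
        (by linarith)
      rwa [intervalIntegral.integral_of_le hle] at hpos
    have hCpos : 0 < C := by
      refine lt_of_lt_of_le hc₀pos ?_
      exact setIntegral_mono_set hgInt
        ((ae_restrict_iff' measurableSet_Ioi).2 (Eventually.of_forall hgnonneg))
        (HasSubset.Subset.eventuallyLE hIsub)
    -- pointwise bound on the ratio, for t ≥ 0
    have hbound : ∀ t : ℝ, 0 ≤ t →
        (∫ h in S, f t h) / (∫ h in Set.Ioi (0 : ℝ), f t h)
          ≤ (C / c₀) * Real.exp (-(t * ((δ ^ 2 - ε ^ 2) / ℏ))) := by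
      intro t ht
      have hftInt := hfInt t ht
      have hftnonneg : ∀ h ∈ Set.Ioi (0 : ℝ), 0 ≤ f t h := by
        intro h hh
        exact mul_nonneg (hgnonneg h hh) (Real.exp_pos _).le
      -- numerator bound
      have hnum : (∫ h in S, f t h) ≤ C * Real.exp (-t * δ ^ 2 / ℏ) := by
        have step1 : (∫ h in S, f t h)
            ≤ ∫ h in S, g h * Real.exp (-t * δ ^ 2 / ℏ) := by
          apply setIntegral_mono_on (hftInt.mono_set hSsub)
            ((hgInt.mono_set hSsub).mul_const _) hSmeas
          intro h hh
          apply mul_le_mul_of_nonneg_left _ (hgnonneg h (hSsub hh))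
          apply Real.exp_le_exp.2
          apply (div_le_div_iff_of_pos_right hℏ).2
          have hδh : δ ≤ |h - h₀| := le_of_lt hh.2
          have : δ ^ 2 ≤ (h - h₀) ^ 2 := by
            rw [← sq_abs (h - h₀)]
            exact pow_le_pow_left₀ hδ.le hδh 2
          nlinarith
        have step2 : (∫ h in S, g h * Real.exp (-t * δ ^ 2 / ℏ))
            = (∫ h in S, g h) * Real.exp (-t * δ ^ 2 / ℏ) := integral_mul_const _ _
        have step3 : (∫ h in S, g h) ≤ C :=
          setIntegral_mono_set hgInt
            ((ae_restrict_iff' measurableSet_Ioi).2 (Eventually.of_forall hgnonneg))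
            (HasSubset.Subset.eventuallyLE hSsub)
        calc (∫ h in S, f t h) ≤ (∫ h in S, g h) * Real.exp (-t * δ ^ 2 / ℏ) := by
              rw [← step2]; exact step1
          _ ≤ C * Real.exp (-t * δ ^ 2 / ℏ) :=
              mul_le_mul_of_nonneg_right step3 (Real.exp_pos _).le
      -- denominator bound
      have hden : c₀ * Real.exp (-t * ε ^ 2 / ℏ) ≤ ∫ h in Set.Ioi (0 : ℝ), f t h := by
        have step1 : c₀ * Real.exp (-t * ε ^ 2 / ℏ) ≤ ∫ h in I, f t h := by
          rw [hc₀def, ← integral_mul_const]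
          apply setIntegral_mono_on ((hgInt.mono_set hIsub).mul_const _)
            (hftInt.mono_set hIsub) measurableSet_Ioc
          intro h hh
          apply mul_le_mul_of_nonneg_left _ (hgnonneg h (hIsub hh))
          apply Real.exp_le_exp.2
          apply (div_le_div_iff_of_pos_right hℏ).2
          have h1 : 0 < h - h₀ := sub_pos.2 hh.1
          have h2 : h - h₀ ≤ ε := by linarith [hh.2]
          have h3 : (h - h₀) ^ 2 ≤ ε ^ 2 := pow_le_pow_left₀ h1.le h2 2
          nlinarith [mul_le_mul_of_nonneg_left h3 ht]
        refine le_trans step1 ?_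
        exact setIntegral_mono_set hftInt
          ((ae_restrict_iff' measurableSet_Ioi).2 (Eventually.of_forall hftnonneg))
          (HasSubset.Subset.eventuallyLE hIsub)
      have hdpos : 0 < c₀ * Real.exp (-t * ε ^ 2 / ℏ) :=
        mul_pos hc₀pos (Real.exp_pos _)
      have hratio : (∫ h in S, f t h) / (∫ h in Set.Ioi (0 : ℝ), f t h)
          ≤ (C * Real.exp (-t * δ ^ 2 / ℏ)) / (c₀ * Real.exp (-t * ε ^ 2 / ℏ)) :=
        div_le_div₀ (by positivity) hnum hdpos hden
      refine le_trans hratio (le_of_eq ?_)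
      rw [mul_div_mul_comm, ← Real.exp_sub]
      congr 1
      field_simp
      ring
    -- nonnegativity of the ratio
    have hnonneg : ∀ t : ℝ,
        0 ≤ (∫ h in S, f t h) / (∫ h in Set.Ioi (0 : ℝ), f t h) := by
      intro t
      apply div_nonneg
      · apply setIntegral_nonneg hSmeas
        intro h hh
        exact mul_nonneg (hgnonneg h (hSsub hh)) (Real.exp_pos _).le
      · apply setIntegral_nonneg measurableSet_Ioi
        intro h hh
        exact mul_nonneg (hgnonneg h hh) (Real.exp_pos _).le
    -- the bounding function tends to zero
    have hα : 0 < (δ ^ 2 - ε ^ 2) / ℏ := by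
      apply div_pos _ hℏ
      rw [hεdef]
      nlinarith
    have htend : Tendsto (fun t : ℝ => (C / c₀) * Real.exp (-(t * ((δ ^ 2 - ε ^ 2) / ℏ))))
        atTop (nhds 0) := by
      have h1 : Tendsto (fun t : ℝ => t * ((δ ^ 2 - ε ^ 2) / ℏ)) atTop atTop :=
        Tendsto.atTop_mul_const hα tendsto_id
      have h2 : Tendsto (fun t : ℝ => Real.exp (-(t * ((δ ^ 2 - ε ^ 2) / ℏ)))) atTop (nhds 0) :=
        Real.tendsto_exp_neg_atTop_nhds_zero.comp h1
      have h3 := h2.const_mul (C / c₀)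
      simpa using h3
    refine squeeze_zero' (Eventually.of_forall hnonneg) ?_ htend
    filter_upwards [eventually_ge_atTop (0:ℝ)] with t ht
    exact hbound t ht
end
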